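/- Let X be a finite-dimensional Banach space with numerical radius a norm on L(X) and T ∈ L(X)_w. If the dual set J_w(T) = { f ∈ (L(X)_w)* : ‖f‖ = 1, f(T) = w(T) } is a singleton, then there exist an extreme point x₀* of B_{X*} and an extreme point x₀ of B_X with x₀*(x₀) = 1 such that the numerical radius attainment set M_{w(T)} = { (x, x*) ∈ S_X × S_{X*} : x*(x) = 1, |x*(Tx)| = w(T) } equals { (μ x₀, conj(μ) x₀*) : |μ| = 1 }. -/

import Mathlib

variable {𝕜 : Type*} [RCLike 𝕜] {X : Type*} [NormedAddCommGroup X] [NormedSpace 𝕜 X]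

/-- The numerical radius of a bounded linear operator on a Banach space. -/
noncomputable def nrad (T : X →L[𝕜] X) : ℝ :=
  sSup {r : ℝ | ∃ (x : X) (f : X →L[𝕜] 𝕜), ‖x‖ = 1 ∧ ‖f‖ = 1 ∧ f x = 1 ∧ r = ‖f (T x)‖}

/-- The functional `x* ⊗ x : T ↦ x*(Tx)` on `L(X)`. -/
noncomputable def tensor (f : X →L[𝕜] 𝕜) (x : X) : (X →L[𝕜] X) →L[𝕜] 𝕜 :=
  f.comp (ContinuousLinearMap.apply 𝕜 X x)

/-- The dual norm induced on functionals by the numerical radius norm. -/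
noncomputable def wdual (g : (X →L[𝕜] X) →L[𝕜] 𝕜) : ℝ :=
  sSup {r : ℝ | ∃ T : X →L[𝕜] X, nrad T ≤ 1 ∧ r = ‖g T‖}

/-- The set `J_w(T)` of norm-one supporting functionals of `T` in `(L(X)_w)*`. -/
noncomputable def Jw (T : X →L[𝕜] X) : Set ((X →L[𝕜] X) →L[𝕜] 𝕜) :=
  {g | wdual g = 1 ∧ g T = (nrad T : 𝕜)}

/-- The numerical radius attainment set `M_{w(T)}`. -/
noncomputable def Mw (T : X →L[𝕜] X) : Set (X × (X →L[𝕜] 𝕜)) :=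
  {p | ‖p.1‖ = 1 ∧ ‖p.2‖ = 1 ∧ p.2 p.1 = 1 ∧ ‖p.2 (T p.1)‖ = nrad T}

/- ===================== auxiliary lemmas ===================== -/

lemma tensor_apply (f : X →L[𝕜] 𝕜) (x : X) (S : X →L[𝕜] X) : tensor f x S = f (S x) := rfl

lemma aux_re_eq_norm {c : 𝕜} (h : RCLike.re c = ‖c‖) : c = (‖c‖ : 𝕜) := by
  have h2 : RCLike.normSq c = ‖c‖ ^ 2 := RCLike.normSq_eq_def' c
  rw [RCLike.normSq_apply] at h2
  have h3 : RCLike.im c * RCLike.im c = 0 := by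
    have h4 : ‖c‖ ^ 2 = RCLike.re c * RCLike.re c := by rw [← h]; ring
    linarith
  have him : RCLike.im c = 0 := mul_self_eq_zero.mp h3
  apply RCLike.ext
  · simp [h]
  · simp [him]

lemma aux_combo {a b φ : 𝕜} {s t w : ℝ} (hs : 0 < s) (ht : 0 < t) (hst : s + t = 1)
    (hw : 0 < w) (hφ : ‖φ‖ = 1) (ha : ‖a‖ ≤ w) (hb : ‖b‖ ≤ w)
    (h : s • a + t • b = φ * (w : 𝕜)) : a = φ * w ∧ b = φ * w := by
  have hφ1 : (starRingEnd 𝕜) φ * φ = 1 := by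
    rw [RCLike.conj_mul, hφ]; norm_num
  have hφ2 : φ * (starRingEnd 𝕜) φ = 1 := by
    rw [RCLike.mul_conj, hφ]; norm_num
  have key : ∀ {c : 𝕜}, ‖c‖ ≤ w → RCLike.re ((starRingEnd 𝕜) φ * c) = w → c = φ * w := by
    intro c hc hre
    have hn : ‖(starRingEnd 𝕜) φ * c‖ ≤ w := by
      rw [norm_mul, RCLike.norm_conj, hφ, one_mul]; exact hc
    have hn' : ‖(starRingEnd 𝕜) φ * c‖ = w :=
      le_antisymm hn (hre ▸ RCLike.re_le_norm _)
    have h3 : (starRingEnd 𝕜) φ * c = (‖(starRingEnd 𝕜) φ * c‖ : 𝕜) :=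
      aux_re_eq_norm (by rw [hre, hn'])
    rw [hn'] at h3
    have h4 : φ * ((starRingEnd 𝕜) φ * c) = φ * (w : 𝕜) := by rw [h3]
    rwa [← mul_assoc, hφ2, one_mul] at h4
  have hra : RCLike.re ((starRingEnd 𝕜) φ * a) ≤ w := by
    calc RCLike.re ((starRingEnd 𝕜) φ * a) ≤ ‖(starRingEnd 𝕜) φ * a‖ := RCLike.re_le_norm _
      _ = ‖a‖ := by rw [norm_mul, RCLike.norm_conj, hφ, one_mul]
      _ ≤ w := ha
  have hrb : RCLike.re ((starRingEnd 𝕜) φ * b) ≤ w := by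
    calc RCLike.re ((starRingEnd 𝕜) φ * b) ≤ ‖(starRingEnd 𝕜) φ * b‖ := RCLike.re_le_norm _
      _ = ‖b‖ := by rw [norm_mul, RCLike.norm_conj, hφ, one_mul]
      _ ≤ w := hb
  have hmain : s * RCLike.re ((starRingEnd 𝕜) φ * a)
      + t * RCLike.re ((starRingEnd 𝕜) φ * b) = w := by
    have h' := congrArg (fun z => RCLike.re ((starRingEnd 𝕜) φ * z)) h
    simp only [mul_add, mul_smul_comm, map_add, RCLike.smul_re] at h'
    rw [← mul_assoc, hφ1, one_mul, RCLike.ofReal_re] at h'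
    exact h'
  have hwa : RCLike.re ((starRingEnd 𝕜) φ * a) = w := by nlinarith
  have hwb : RCLike.re ((starRingEnd 𝕜) φ * b) = w := by nlinarith
  exact ⟨key ha hwa, key hb hwb⟩

lemma aux_sep {x y : X} (h : ∀ ψ : X →L[𝕜] 𝕜, ψ x = ψ y) : x = y := by
  by_contra hne
  obtain ⟨ψ, -, hψ⟩ := exists_dual_vector 𝕜 (x - y) (norm_ne_zero_iff.2 (sub_ne_zero.2 hne))
  rw [map_sub, h ψ, sub_self] at hψ
  have : ‖x - y‖ = 0 := by exact_mod_cast hψ.symm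
  exact (sub_ne_zero.2 hne) (norm_eq_zero.mp this)

lemma nrad_bddAbove (T : X →L[𝕜] X) :
    BddAbove {r : ℝ | ∃ (x : X) (f : X →L[𝕜] 𝕜), ‖x‖ = 1 ∧ ‖f‖ = 1 ∧ f x = 1 ∧ r = ‖f (T x)‖} := by
  refine ⟨‖T‖, ?_⟩
  rintro r ⟨x, f, hx, hf, -, rfl⟩
  have h1 := f.le_opNorm (T x)
  have h2 := T.le_opNorm x
  rw [hf, one_mul] at h1
  rw [hx, mul_one] at h2
  exact h1.trans h2

lemma norm_le_nrad (T : X →L[𝕜] X) {x : X} {f : X →L[𝕜] 𝕜}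
    (hx : ‖x‖ = 1) (hf : ‖f‖ = 1) (hfx : f x = 1) : ‖f (T x)‖ ≤ nrad T :=
  le_csSup (nrad_bddAbove T) ⟨x, f, hx, hf, hfx, rfl⟩

lemma nrad_nonneg (T : X →L[𝕜] X) : 0 ≤ nrad T := by
  apply Real.sSup_nonneg
  rintro r ⟨x, f, -, -, -, rfl⟩
  positivity

set_option maxHeartbeats 1000000 in
/-- If `T` is nu-smooth, then `M_{w(T)} = {(μx₀, conj(μ)x₀*) : |μ| = 1}` for some extreme
points `x₀ ∈ E_X`, `x₀* ∈ E_{X*}` with `x₀*(x₀) = 1`. -/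
theorem stmt_14 {X : Type*} [NormedAddCommGroup X] [NormedSpace 𝕜 X]
    [NormedSpace ℝ X] [IsScalarTower ℝ 𝕜 X] [FiniteDimensional 𝕜 X]
    (hw : ∀ T : X →L[𝕜] X, nrad T = 0 → T = 0)
    (T : X →L[𝕜] X) (hsm : ∃ g, Jw T = {g}) :
    ∃ (x₀ : X) (f₀ : X →L[𝕜] 𝕜),
      x₀ ∈ Set.extremePoints ℝ (Metric.closedBall (0 : X) 1) ∧
      f₀ ∈ Set.extremePoints ℝ (Metric.closedBall (0 : X →L[𝕜] 𝕜) 1) ∧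
      f₀ x₀ = 1 ∧
      Mw T = {p | ∃ μ : 𝕜, ‖μ‖ = 1 ∧ p = (μ • x₀, (starRingEnd 𝕜 μ) • f₀)} := by
  classical
  obtain ⟨g, hg⟩ := hsm
  have hgJ : g ∈ Jw T := by rw [hg]; rfl
  obtain ⟨hg1, hgT⟩ := hgJ
  -- X is nontrivial
  have hX : Nontrivial X := by
    by_contra hns
    rw [not_nontrivial_iff_subsingleton] at hns
    have hS0 : ∀ S : X →L[𝕜] X, S = 0 := fun S => by
      ext x; rw [Subsingleton.elim x 0]; simp
    have hwd : wdual g = 0 := by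
      have hset : {r : ℝ | ∃ S : X →L[𝕜] X, nrad S ≤ 1 ∧ r = ‖g S‖} = {0} := by
        ext r
        constructor
        · rintro ⟨S, -, rfl⟩
          rw [hS0 S]; simp
        · rintro rfl
          refine ⟨0, ?_, by simp⟩
          apply Real.sSup_le _ zero_le_one
          rintro r ⟨x, f, hx, -, -, rfl⟩
          simp
      rw [wdual, hset, csSup_singleton]
    rw [hg1] at hwd
    exact one_ne_zero hwd
  -- a normalized pair exists
  obtain ⟨z, hz⟩ := exists_ne (0 : X)
  set e : X := (‖z‖ : 𝕜)⁻¹ • z with he_def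
  have he : ‖e‖ = 1 := norm_smul_inv_norm hz
  have he0 : e ≠ 0 := fun h => by rw [h] at he; simp at he
  obtain ⟨fe, hfe1, hfe⟩ := exists_dual_vector 𝕜 e (norm_ne_zero_iff.2 he0)
  have hfee : fe e = 1 := by rw [hfe, he]; norm_num
  -- the numerical radius of T is positive
  have hnz : nrad T ≠ 0 := by
    intro h0
    have hgT0 : g T = 0 := by rw [hgT, h0]; simp
    have hneg : -g ∈ Jw T := by
      constructor
      · have hset : {r : ℝ | ∃ S : X →L[𝕜] X, nrad S ≤ 1 ∧ r = ‖(-g) S‖}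
            = {r : ℝ | ∃ S : X →L[𝕜] X, nrad S ≤ 1 ∧ r = ‖g S‖} := by
          ext r
          simp [ContinuousLinearMap.neg_apply]
        show wdual (-g) = 1
        rw [wdual, hset]
        exact hg1
      · show (-g) T = ((nrad T : ℝ) : 𝕜)
        rw [ContinuousLinearMap.neg_apply, hgT0, h0]; simp
    rw [hg, Set.mem_singleton_iff] at hneg
    have hg0 : g = 0 := by
      have h2 : g + g = 0 := neg_eq_iff_add_eq_zero.mp hneg
      ext S
      have h3 := congrArg (fun h : (X →L[𝕜] X) →L[𝕜] 𝕜 => h S) h2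
      simp only [ContinuousLinearMap.add_apply, ContinuousLinearMap.zero_apply] at h3 ⊢
      linear_combination (h3 : g S + g S = 0) / 2
    rw [hg0] at hg1
    have hwd0 : wdual (0 : (X →L[𝕜] X) →L[𝕜] 𝕜) = 0 := by
      have hset : {r : ℝ | ∃ S : X →L[𝕜] X, nrad S ≤ 1 ∧ r = ‖(0 : (X →L[𝕜] X) →L[𝕜] 𝕜) S‖}
          = {0} := by
        ext r
        constructor
        · rintro ⟨S, -, rfl⟩; simp
        · rintro rfl
          refine ⟨0, ?_, by simp⟩
          apply Real.sSup_le _ zero_le_one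
          rintro r ⟨x, f, hx, -, -, rfl⟩
          simp
      rw [wdual, hset, csSup_singleton]
    rw [hwd0] at hg1
    exact zero_ne_one hg1
  have hw0 : 0 < nrad T := lt_of_le_of_ne (nrad_nonneg T) (Ne.symm hnz)
  set w : ℝ := nrad T with hw_def
  have hwK : ((w : 𝕜)) ≠ 0 := by
    simp only [ne_eq, RCLike.ofReal_eq_zero]
    exact ne_of_gt hw0
  -- every normalized maximizing pair yields the unique support functional g
  have hJmem : ∀ (x : X) (f : X →L[𝕜] 𝕜), ‖x‖ = 1 → ‖f‖ = 1 → f x = 1 → ‖f (T x)‖ = w →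
      (starRingEnd 𝕜 (f (T x) / (w : 𝕜))) • tensor f x = g := by
    intro x f hx hf hfx hfT
    set φ : 𝕜 := f (T x) / (w : 𝕜) with hφ_def
    have hφn : ‖φ‖ = 1 := by
      rw [hφ_def, norm_div, hfT, RCLike.norm_ofReal, abs_of_pos hw0, div_self (ne_of_gt hw0)]
    have hfTx : f (T x) = φ * (w : 𝕜) := by
      rw [hφ_def, div_mul_cancel₀ _ hwK]
    have hφ1 : (starRingEnd 𝕜) φ * φ = 1 := by
      rw [RCLike.conj_mul, hφn]; norm_num
    set h : (X →L[𝕜] X) →L[𝕜] 𝕜 := (starRingEnd 𝕜 φ) • tensor f x with hh_def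
    have hhS : ∀ S : X →L[𝕜] X, h S = (starRingEnd 𝕜 φ) * f (S x) := fun S => by
      rw [hh_def, ContinuousLinearMap.smul_apply, tensor_apply, smul_eq_mul]
    have hhT : h T = ((w : ℝ) : 𝕜) := by
      rw [hhS, hfTx, ← mul_assoc, hφ1, one_mul]
    have hub : ∀ r ∈ {r : ℝ | ∃ S : X →L[𝕜] X, nrad S ≤ 1 ∧ r = ‖h S‖}, r ≤ 1 := by
      rintro r ⟨S, hS, rfl⟩
      rw [hhS, norm_mul, RCLike.norm_conj, hφn, one_mul]
      exact (norm_le_nrad S hx hf hfx).trans hS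
    have hmem1 : (1 : ℝ) ∈ {r : ℝ | ∃ S : X →L[𝕜] X, nrad S ≤ 1 ∧ r = ‖h S‖} := by
      refine ⟨(w⁻¹ : ℝ) • T, ?_, ?_⟩
      · apply Real.sSup_le _ zero_le_one
        rintro r ⟨x', f', hx', hf', hfx', rfl⟩
        rw [ContinuousLinearMap.smul_apply, f'.map_smul_of_tower,
          norm_smul (w⁻¹ : ℝ) (f' (T x'))]
        have : ‖f' (T x')‖ ≤ w := norm_le_nrad T hx' hf' hfx'
        calc ‖(w⁻¹ : ℝ)‖ * ‖f' (T x')‖ ≤ ‖(w⁻¹ : ℝ)‖ * w := by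
              apply mul_le_mul_of_nonneg_left this (norm_nonneg _)
          _ = 1 := by
              rw [Real.norm_eq_abs, abs_of_pos (inv_pos.2 hw0), inv_mul_cancel₀ (ne_of_gt hw0)]
      · rw [h.map_smul_of_tower, hhT, norm_smul (w⁻¹ : ℝ) ((w : ℝ) : 𝕜), Real.norm_eq_abs,
          abs_of_pos (inv_pos.2 hw0), RCLike.norm_ofReal, abs_of_pos hw0,
          inv_mul_cancel₀ (ne_of_gt hw0)]
    have hwh : wdual h = 1 := by
      apply le_antisymm
      · exact Real.sSup_le hub zero_le_one
      · exact le_csSup ⟨1, fun r hr => hub r hr⟩ hmem1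
    have : h ∈ Jw T := ⟨hwh, hhT⟩
    rw [hg, Set.mem_singleton_iff] at this
    exact this
  -- attainment by compactness
  have hatt : ∃ p : X × (X →L[𝕜] 𝕜), p ∈ Mw T := by
    set K : Set (X × (X →L[𝕜] 𝕜)) := {p | ‖p.1‖ = 1 ∧ ‖p.2‖ = 1 ∧ p.2 p.1 = 1} with hK_def
    have hKne : K.Nonempty := ⟨(e, fe), he, hfe1, hfee⟩
    have hev : Continuous fun p : X × (X →L[𝕜] 𝕜) => p.2 p.1 :=
      isBoundedBilinearMap_apply.continuous.comp (continuous_snd.prodMk continuous_fst)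
    haveI : ProperSpace (X × (X →L[𝕜] 𝕜)) := FiniteDimensional.proper 𝕜 _
    have hKc : IsCompact K := by
      have hclosed : IsClosed K := by
        have h1 : IsClosed {p : X × (X →L[𝕜] 𝕜) | ‖p.1‖ = 1} :=
          isClosed_eq continuous_fst.norm continuous_const
        have h2 : IsClosed {p : X × (X →L[𝕜] 𝕜) | ‖p.2‖ = 1} :=
          isClosed_eq continuous_snd.norm continuous_const
        have h3 : IsClosed {p : X × (X →L[𝕜] 𝕜) | p.2 p.1 = 1} :=
          isClosed_eq hev continuous_const
        exact (h1.inter (h2.inter h3))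
      have hbdd : Bornology.IsBounded K := by
        apply (Metric.isBounded_closedBall (x := (0 : X × (X →L[𝕜] 𝕜)))
          (r := 1)).subset
        rintro ⟨x, f⟩ ⟨hx, hf, -⟩
        rw [Metric.mem_closedBall, dist_zero_right]
        rw [Prod.norm_def]
        simp only [hx, hf]
        norm_num
      exact Metric.isCompact_of_isClosed_isBounded hclosed hbdd
    have hcont : Continuous fun p : X × (X →L[𝕜] 𝕜) => ‖p.2 (T p.1)‖ := by
      have : Continuous fun p : X × (X →L[𝕜] 𝕜) => p.2 (T p.1) :=
        isBoundedBilinearMap_apply.continuous.comp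
          (continuous_snd.prodMk (T.continuous.comp continuous_fst))
      exact this.norm
    obtain ⟨p₀, hp₀K, hmax'⟩ := hKc.exists_isMaxOn hKne hcont.continuousOn
    have hmax : ∀ q ∈ K, ‖q.2 (T q.1)‖ ≤ ‖p₀.2 (T p₀.1)‖ := fun q hq => hmax' hq
    have hnr : nrad T = ‖p₀.2 (T p₀.1)‖ := by
      apply le_antisymm
      · apply Real.sSup_le _ (norm_nonneg _)
        rintro r ⟨x, f, hx, hf, hfx, rfl⟩
        exact hmax (x, f) ⟨hx, hf, hfx⟩
      · exact norm_le_nrad T hp₀K.1 hp₀K.2.1 hp₀K.2.2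
    exact ⟨p₀, hp₀K.1, hp₀K.2.1, hp₀K.2.2, hnr.symm⟩
  obtain ⟨⟨x₀, f₀⟩, hx₀n, hf₀n, hfx₀, hfT₀⟩ := hatt
  have hx₀0 : x₀ ≠ 0 := fun h => by rw [h] at hx₀n; simp at hx₀n
  set φ₀ : 𝕜 := f₀ (T x₀) / (w : 𝕜) with hφ₀_def
  have hφ₀n : ‖φ₀‖ = 1 := by
    rw [hφ₀_def, norm_div, hfT₀, RCLike.norm_ofReal, abs_of_pos hw0, div_self (ne_of_gt hw0)]
  have hfTx₀ : f₀ (T x₀) = φ₀ * (w : 𝕜) := by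
    rw [hφ₀_def, div_mul_cancel₀ _ hwK]
  have hφ₀1 : (starRingEnd 𝕜) φ₀ * φ₀ = 1 := by rw [RCLike.conj_mul, hφ₀n]; norm_num
  have hφ₀2 : φ₀ * (starRingEnd 𝕜) φ₀ = 1 := by rw [RCLike.mul_conj, hφ₀n]; norm_num
  have hgeq₀ : (starRingEnd 𝕜 φ₀) • tensor f₀ x₀ = g := hJmem x₀ f₀ hx₀n hf₀n hfx₀ hfT₀
  -- Main set equality
  have hMweq : Mw T = {p : X × (X →L[𝕜] 𝕜) |
      ∃ μ : 𝕜, ‖μ‖ = 1 ∧ p = (μ • x₀, (starRingEnd 𝕜 μ) • f₀)} := by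
    apply Set.eq_of_subset_of_subset
    · rintro ⟨x, f⟩ ⟨hx, hf, hfx, hfT⟩
      simp only [Set.mem_setOf_eq] at hfx hfT ⊢
      set φ : 𝕜 := f (T x) / (w : 𝕜) with hφ_def
      have hφn : ‖φ‖ = 1 := by
        rw [hφ_def, norm_div, hfT, RCLike.norm_ofReal, abs_of_pos hw0, div_self (ne_of_gt hw0)]
      have hφ1 : (starRingEnd 𝕜) φ * φ = 1 := by rw [RCLike.conj_mul, hφn]; norm_num
      have hφ2 : φ * (starRingEnd 𝕜) φ = 1 := by rw [RCLike.mul_conj, hφn]; norm_num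
      have hgeq : (starRingEnd 𝕜 φ) • tensor f x = g := hJmem x f hx hf hfx hfT
      have key : ∀ S : X →L[𝕜] X,
          (starRingEnd 𝕜 φ) * f (S x) = (starRingEnd 𝕜 φ₀) * f₀ (S x₀) := by
        intro S
        have h1 := congrArg (fun h : (X →L[𝕜] X) →L[𝕜] 𝕜 => h S) (hgeq.trans hgeq₀.symm)
        simpa [ContinuousLinearMap.smul_apply, tensor_apply, smul_eq_mul] using h1
      have star : ∀ (ψ : X →L[𝕜] 𝕜) (u : X),
          (starRingEnd 𝕜 φ) * (ψ x * f u) = (starRingEnd 𝕜 φ₀) * (ψ x₀ * f₀ u) := by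
        intro ψ u
        have h1 := key (ψ.smulRight u)
        simpa [ContinuousLinearMap.smulRight_apply, map_smul, smul_eq_mul] using h1
      obtain ⟨ψ₀, -, hψ₀⟩ := exists_dual_vector 𝕜 x₀ (norm_ne_zero_iff.2 hx₀0)
      have hψ₀1 : ψ₀ x₀ = 1 := by rw [hψ₀, hx₀n]; norm_num
      set a : 𝕜 := φ₀ * ((starRingEnd 𝕜 φ) * ψ₀ x) with ha_def
      have ha : ∀ u : X, f₀ u = a * f u := by
        intro u
        have h1 := star ψ₀ u
        rw [hψ₀1, one_mul] at h1
        calc f₀ u = φ₀ * ((starRingEnd 𝕜 φ₀) * f₀ u) := by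
              rw [← mul_assoc, hφ₀2, one_mul]
          _ = φ₀ * ((starRingEnd 𝕜 φ) * (ψ₀ x * f u)) := by rw [h1]
          _ = a * f u := by rw [ha_def]; ring
      set μ : 𝕜 := φ * ((starRingEnd 𝕜 φ₀) * a) with hμ_def
      have hf₀x : f₀ x = a := by rw [ha x, hfx, mul_one]
      have hxμ : x = μ • x₀ := by
        apply aux_sep (𝕜 := 𝕜)
        intro ψ
        have h1 := star ψ x
        rw [hfx, mul_one, hf₀x] at h1
        calc ψ x = φ * ((starRingEnd 𝕜 φ) * ψ x) := by rw [← mul_assoc, hφ2, one_mul]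
          _ = φ * ((starRingEnd 𝕜 φ₀) * (ψ x₀ * a)) := by rw [h1]
          _ = μ * ψ x₀ := by rw [hμ_def]; ring
          _ = ψ (μ • x₀) := by rw [map_smul, smul_eq_mul]
      have hμn : ‖μ‖ = 1 := by
        have := hx
        rw [hxμ, norm_smul, hx₀n, mul_one] at this
        exact this
      have hμ1 : (starRingEnd 𝕜) μ * μ = 1 := by rw [RCLike.conj_mul, hμn]; norm_num
      have hμ2 : μ * (starRingEnd 𝕜) μ = 1 := by rw [RCLike.mul_conj, hμn]; norm_num
      have hfx₀μ : f x₀ = (starRingEnd 𝕜) μ := by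
        have h1 : f x = μ * f x₀ := by rw [hxμ, map_smul, smul_eq_mul]
        rw [hfx] at h1
        have h2 := congrArg ((starRingEnd 𝕜 μ) * ·) h1
        simpa [← mul_assoc, hμ1] using h2.symm
      have haμ : a = μ := by
        have h1 : (1 : 𝕜) = a * (starRingEnd 𝕜) μ := by
          rw [← hfx₀, ha x₀, hfx₀μ]
        have h2 := congrArg (· * μ) h1
        simpa [mul_assoc, hμ1] using h2.symm
      have hfμ : f = (starRingEnd 𝕜 μ) • f₀ := by
        ext u
        rw [ContinuousLinearMap.smul_apply, smul_eq_mul, ha u, haμ, ← mul_assoc, hμ1, one_mul]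
      exact ⟨μ, hμn, by rw [Prod.mk.injEq]; exact ⟨hxμ, hfμ⟩⟩
    · rintro ⟨x, f⟩ ⟨μ, hμn, hp⟩
      rw [Prod.mk.injEq] at hp
      obtain ⟨hx, hf⟩ := hp
      have hμ1 : (starRingEnd 𝕜) μ * μ = 1 := by rw [RCLike.conj_mul, hμn]; norm_num
      subst hx hf
      refine ⟨?_, ?_, ?_, ?_⟩
      · show ‖μ • x₀‖ = 1
        rw [norm_smul, hμn, hx₀n, mul_one]
      · show ‖(starRingEnd 𝕜 μ) • f₀‖ = 1
        rw [norm_smul ((starRingEnd 𝕜) μ) f₀, RCLike.norm_conj, hμn, hf₀n, mul_one]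
      · show ((starRingEnd 𝕜 μ) • f₀) (μ • x₀) = 1
        rw [ContinuousLinearMap.smul_apply, map_smul, smul_eq_mul, smul_eq_mul,
          ← mul_assoc, hμ1, one_mul, hfx₀]
      · show ‖((starRingEnd 𝕜 μ) • f₀) (T (μ • x₀))‖ = nrad T
        rw [map_smul, ContinuousLinearMap.smul_apply, map_smul, smul_eq_mul, smul_eq_mul,
          ← mul_assoc, hμ1, one_mul]
        exact hfT₀
  -- x₀ is an extreme point of the unit ball of X
  have hext_x₀ : x₀ ∈ Set.extremePoints ℝ (Metric.closedBall (0 : X) 1) := by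
    rw [mem_extremePoints]
    constructor
    · rw [Metric.mem_closedBall, dist_zero_right, hx₀n]
    intro x₁ h1 x₂ h2 hseg
    rw [Metric.mem_closedBall, dist_zero_right] at h1 h2
    obtain ⟨s, t, hs, ht, hst, hsum⟩ := hseg
    -- the pairing values
    have hb1 : ‖f₀ x₁‖ ≤ 1 := by
      calc ‖f₀ x₁‖ ≤ ‖f₀‖ * ‖x₁‖ := f₀.le_opNorm x₁
        _ ≤ 1 * 1 := by rw [hf₀n]; exact mul_le_mul_of_nonneg_left h1 zero_le_one
        _ = 1 := one_mul 1
    have hb2 : ‖f₀ x₂‖ ≤ 1 := by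
      calc ‖f₀ x₂‖ ≤ ‖f₀‖ * ‖x₂‖ := f₀.le_opNorm x₂
        _ ≤ 1 * 1 := by rw [hf₀n]; exact mul_le_mul_of_nonneg_left h2 zero_le_one
        _ = 1 := one_mul 1
    have hsum1 : s • f₀ x₁ + t • f₀ x₂ = (1 : 𝕜) * ((1 : ℝ) : 𝕜) := by
      rw [← f₀.map_smul_of_tower, ← f₀.map_smul_of_tower, ← map_add, hsum, hfx₀]
      norm_num
    obtain ⟨hv1, hv2⟩ := aux_combo hs ht hst one_pos (by simp) hb1 hb2 hsum1
    rw [one_mul] at hv1 hv2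
    have hv1' : f₀ x₁ = 1 := by rw [hv1]; norm_num
    have hv2' : f₀ x₂ = 1 := by rw [hv2]; norm_num
    have hn1 : ‖x₁‖ = 1 := by
      apply le_antisymm h1
      have := f₀.le_opNorm x₁
      rw [hv1', hf₀n, one_mul] at this
      simpa using this
    have hn2 : ‖x₂‖ = 1 := by
      apply le_antisymm h2
      have := f₀.le_opNorm x₂
      rw [hv2', hf₀n, one_mul] at this
      simpa using this
    have hT1 : ‖f₀ (T x₁)‖ ≤ w := norm_le_nrad T hn1 hf₀n hv1'
    have hT2 : ‖f₀ (T x₂)‖ ≤ w := norm_le_nrad T hn2 hf₀n hv2'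
    have hTsum : s • f₀ (T x₁) + t • f₀ (T x₂) = φ₀ * (w : 𝕜) := by
      rw [← f₀.map_smul_of_tower, ← f₀.map_smul_of_tower, ← T.map_smul_of_tower,
        ← T.map_smul_of_tower, ← map_add, ← map_add, hsum, hfTx₀]
    obtain ⟨hw1, hw2⟩ := aux_combo hs ht hst hw0 hφ₀n hT1 hT2 hTsum
    have hm1 : (x₁, f₀) ∈ Mw T := by
      refine ⟨hn1, hf₀n, hv1', ?_⟩
      show ‖f₀ (T x₁)‖ = nrad T
      rw [hw1, norm_mul, hφ₀n, one_mul, RCLike.norm_ofReal, abs_of_pos hw0]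
    have hm2 : (x₂, f₀) ∈ Mw T := by
      refine ⟨hn2, hf₀n, hv2', ?_⟩
      show ‖f₀ (T x₂)‖ = nrad T
      rw [hw2, norm_mul, hφ₀n, one_mul, RCLike.norm_ofReal, abs_of_pos hw0]
    rw [hMweq] at hm1 hm2
    obtain ⟨μ₁, hμ₁n, hp₁⟩ := hm1
    obtain ⟨μ₂, hμ₂n, hp₂⟩ := hm2
    rw [Prod.mk.injEq] at hp₁ hp₂
    have hμ₁e : μ₁ = 1 := by
      have h := congrArg (fun f : X →L[𝕜] 𝕜 => f x₀) hp₁.2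
      simp only [ContinuousLinearMap.smul_apply, smul_eq_mul, hfx₀, mul_one] at h
      have : (starRingEnd 𝕜) μ₁ = 1 := h.symm
      calc μ₁ = (starRingEnd 𝕜) ((starRingEnd 𝕜) μ₁) := (RCLike.conj_conj μ₁).symm
        _ = 1 := by rw [this]; simp
    have hμ₂e : μ₂ = 1 := by
      have h := congrArg (fun f : X →L[𝕜] 𝕜 => f x₀) hp₂.2
      simp only [ContinuousLinearMap.smul_apply, smul_eq_mul, hfx₀, mul_one] at h
      have : (starRingEnd 𝕜) μ₂ = 1 := h.symm
      calc μ₂ = (starRingEnd 𝕜) ((starRingEnd 𝕜) μ₂) := (RCLike.conj_conj μ₂).symm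
        _ = 1 := by rw [this]; simp
    constructor
    · rw [hp₁.1, hμ₁e, one_smul]
    · rw [hp₂.1, hμ₂e, one_smul]
  -- f₀ is an extreme point of the unit ball of the dual
  have hext_f₀ : f₀ ∈ Set.extremePoints ℝ (Metric.closedBall (0 : X →L[𝕜] 𝕜) 1) := by
    rw [mem_extremePoints]
    constructor
    · rw [Metric.mem_closedBall, dist_zero_right, hf₀n]
    intro f₁ h1 f₂ h2 hseg
    rw [Metric.mem_closedBall, dist_zero_right] at h1 h2
    obtain ⟨s, t, hs, ht, hst, hsum⟩ := hseg
    have hb1 : ‖f₁ x₀‖ ≤ 1 := by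
      calc ‖f₁ x₀‖ ≤ ‖f₁‖ * ‖x₀‖ := f₁.le_opNorm x₀
        _ ≤ 1 * 1 := by rw [hx₀n]; exact mul_le_mul_of_nonneg_right h1 zero_le_one
        _ = 1 := one_mul 1
    have hb2 : ‖f₂ x₀‖ ≤ 1 := by
      calc ‖f₂ x₀‖ ≤ ‖f₂‖ * ‖x₀‖ := f₂.le_opNorm x₀
        _ ≤ 1 * 1 := by rw [hx₀n]; exact mul_le_mul_of_nonneg_right h2 zero_le_one
        _ = 1 := one_mul 1
    have hsum1 : s • f₁ x₀ + t • f₂ x₀ = (1 : 𝕜) * ((1 : ℝ) : 𝕜) := by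
      have := congrArg (fun f : X →L[𝕜] 𝕜 => f x₀) hsum
      simp only [ContinuousLinearMap.add_apply, ContinuousLinearMap.smul_apply] at this
      rw [this, hfx₀]; norm_num
    obtain ⟨hv1, hv2⟩ := aux_combo hs ht hst one_pos (by simp) hb1 hb2 hsum1
    rw [one_mul] at hv1 hv2
    have hv1' : f₁ x₀ = 1 := by rw [hv1]; norm_num
    have hv2' : f₂ x₀ = 1 := by rw [hv2]; norm_num
    have hn1 : ‖f₁‖ = 1 := by
      apply le_antisymm h1
      have := f₁.le_opNorm x₀
      rw [hv1', hx₀n, mul_one] at this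
      simpa using this
    have hn2 : ‖f₂‖ = 1 := by
      apply le_antisymm h2
      have := f₂.le_opNorm x₀
      rw [hv2', hx₀n, mul_one] at this
      simpa using this
    have hT1 : ‖f₁ (T x₀)‖ ≤ w := norm_le_nrad T hx₀n hn1 hv1'
    have hT2 : ‖f₂ (T x₀)‖ ≤ w := norm_le_nrad T hx₀n hn2 hv2'
    have hTsum : s • f₁ (T x₀) + t • f₂ (T x₀) = φ₀ * (w : 𝕜) := by
      have := congrArg (fun f : X →L[𝕜] 𝕜 => f (T x₀)) hsum
      simp only [ContinuousLinearMap.add_apply, ContinuousLinearMap.smul_apply] at this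
      rw [this, hfTx₀]
    obtain ⟨hw1, hw2⟩ := aux_combo hs ht hst hw0 hφ₀n hT1 hT2 hTsum
    have hm1 : (x₀, f₁) ∈ Mw T := by
      refine ⟨hx₀n, hn1, hv1', ?_⟩
      show ‖f₁ (T x₀)‖ = nrad T
      rw [hw1, norm_mul, hφ₀n, one_mul, RCLike.norm_ofReal, abs_of_pos hw0]
    have hm2 : (x₀, f₂) ∈ Mw T := by
      refine ⟨hx₀n, hn2, hv2', ?_⟩
      show ‖f₂ (T x₀)‖ = nrad T
      rw [hw2, norm_mul, hφ₀n, one_mul, RCLike.norm_ofReal, abs_of_pos hw0]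
    rw [hMweq] at hm1 hm2
    obtain ⟨μ₁, hμ₁n, hp₁⟩ := hm1
    obtain ⟨μ₂, hμ₂n, hp₂⟩ := hm2
    rw [Prod.mk.injEq] at hp₁ hp₂
    have hμ₁e : μ₁ = 1 := by
      have h := hp₁.1
      have h2 : (1 - μ₁) • x₀ = 0 := by rw [sub_smul, one_smul, ← h, sub_self]
      have h4 : ‖(1 - μ₁)‖ * ‖x₀‖ = 0 := by
        rw [← norm_smul (1 - μ₁) x₀, h2, norm_zero]
      rw [hx₀n, mul_one] at h4
      have h5 : (1 : 𝕜) - μ₁ = 0 := norm_eq_zero.mp h4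
      linear_combination -h5
    have hμ₂e : μ₂ = 1 := by
      have h := hp₂.1
      have h2 : (1 - μ₂) • x₀ = 0 := by rw [sub_smul, one_smul, ← h, sub_self]
      have h4 : ‖(1 - μ₂)‖ * ‖x₀‖ = 0 := by
        rw [← norm_smul (1 - μ₂) x₀, h2, norm_zero]
      rw [hx₀n, mul_one] at h4
      have h5 : (1 : 𝕜) - μ₂ = 0 := norm_eq_zero.mp h4
      linear_combination -h5
    constructor
    · rw [hp₁.2, hμ₁e]; simp
    · rw [hp₂.2, hμ₂e]; simp
  exact ⟨x₀, f₀, hext_x₀, hext_f₀, hfx₀, hMweq⟩
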